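/- arXiv:0908.3625 — 2 statements merged into one kernel-verified Lean document; each statement's English description precedes it below -/
import Mathlib

section
/- Let A and B₀ be constant real skew-symmetric 3×3 matrices, and set B(t) = e^{tA} B₀ e^{−tA} (which is skew-symmetric for every t, and is the solution of B′ = AB − BA given in the paper by the 3×3 matrix exponential exp(Nt)). Then v(t,x) = Ax, H(t,x) = B(t)x and p(t,x) = (ρ/2)|Ax|² + ρ μ₀ |B(t)x|² solve the MHD equations on ℝ × ℝ³. (Proposition 2.4.) -/
open Real Matrix

/-- Partial derivative in the `i`-th spatial coordinate. -/
noncomputable def pd (i : Fin 3) (f : (Fin 3 → ℝ) → ℝ) (x : Fin 3 → ℝ) : ℝ :=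
  deriv (fun s => f (Function.update x i s)) (x i)

/-- Divergence of a vector field on `ℝ³`. -/
noncomputable def vdiv (F : (Fin 3 → ℝ) → (Fin 3 → ℝ)) (x : Fin 3 → ℝ) : ℝ :=
  ∑ i, pd i (fun y => F y i) x

/-- Curl of a vector field on `ℝ³`. -/
noncomputable def vcurl (F : (Fin 3 → ℝ) → (Fin 3 → ℝ)) (x : Fin 3 → ℝ) : Fin 3 → ℝ :=
  ![pd 1 (fun y => F y 2) x - pd 2 (fun y => F y 1) x,
    pd 2 (fun y => F y 0) x - pd 0 (fun y => F y 2) x,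
    pd 0 (fun y => F y 1) x - pd 1 (fun y => F y 0) x]

/-- Laplacian of a scalar field on `ℝ³`. -/
noncomputable def slap (f : (Fin 3 → ℝ) → ℝ) (x : Fin 3 → ℝ) : ℝ :=
  ∑ i, pd i (fun y => pd i f y) x

/-- Cross product on `ℝ³`. -/
def cross3 (u v : Fin 3 → ℝ) : Fin 3 → ℝ :=
  ![u 1 * v 2 - u 2 * v 1, u 2 * v 0 - u 0 * v 2, u 0 * v 1 - u 1 * v 0]

/-- The incompressible viscous MHD equations with finite electrical conductivity:
(M1) `∇·v = 0`, (M2) momentum, (M3) `∇·H = 0`, (M4) induction. -/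
def MHD (ρ ν μ₀ η : ℝ) (v H : ℝ → (Fin 3 → ℝ) → (Fin 3 → ℝ))
    (p : ℝ → (Fin 3 → ℝ) → ℝ) : Prop :=
  ∀ (t : ℝ) (x : Fin 3 → ℝ),
    vdiv (v t) x = 0 ∧
    (∀ i, deriv (fun s => v s x i) t
        + (∑ j, v t x j * pd j (fun y => v t y i) x)
        - μ₀ * cross3 (H t x) (vcurl (H t) x) i
        + (1 / ρ) * pd i (p t) x
        = ν * slap (fun y => v t y i) x) ∧
    vdiv (H t) x = 0 ∧
    (∀ i, deriv (fun s => H s x i) t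
        = vcurl (fun y => cross3 (v t y) (H t y)) x i
          + η * slap (fun y => H t y i) x)

section Aux
open NormedSpace

lemma update_eq (x : Fin 3 → ℝ) (i : Fin 3) (s : ℝ) :
    Function.update x i s = x + Pi.single i (s - x i) := by
  funext j
  rcases eq_or_ne j i with rfl | h
  · simp
  · simp [Function.update_of_ne h, Pi.single_eq_of_ne h]

lemma mulVec_update (M : Matrix (Fin 3) (Fin 3) ℝ) (x : Fin 3 → ℝ) (i : Fin 3) (s : ℝ) (k : Fin 3) :
    M.mulVec (Function.update x i s) k = M.mulVec x k + (s - x i) * M k i := by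
  rw [update_eq, Matrix.mulVec_add, Matrix.mulVec_single]
  simp [mul_comm]

lemma pd_linear (M : Matrix (Fin 3) (Fin 3) ℝ) (k i : Fin 3) (x : Fin 3 → ℝ) :
    pd i (fun y => M.mulVec y k) x = M k i := by
  unfold pd
  have : (fun s => M.mulVec (Function.update x i s) k)
      = fun s => M.mulVec x k + (s - x i) * M k i := by
    funext s; exact mulVec_update M x i s k
  rw [this]
  have h : HasDerivAt (fun s : ℝ => M.mulVec x k + (s - x i) * M k i) (M k i) (x i) := by
    simpa using (((hasDerivAt_id (x i)).sub_const (x i)).mul_const (M k i)).const_add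
      (M.mulVec x k)
  exact h.deriv

lemma pd_const (c : ℝ) (i : Fin 3) (x : Fin 3 → ℝ) : pd i (fun _ => c) x = 0 := by
  simp [pd]

lemma slap_linear (M : Matrix (Fin 3) (Fin 3) ℝ) (k : Fin 3) (x : Fin 3 → ℝ) :
    slap (fun y => M.mulVec y k) x = 0 := by
  simp [slap, pd_linear, pd_const]

lemma pd_bilin (M N : Matrix (Fin 3) (Fin 3) ℝ) (k l k' l' i : Fin 3) (x : Fin 3 → ℝ) :
    pd i (fun y => M.mulVec y k * N.mulVec y l - M.mulVec y k' * N.mulVec y l') x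
      = (M k i * N.mulVec x l + M.mulVec x k * N l i)
        - (M k' i * N.mulVec x l' + M.mulVec x k' * N l' i) := by
  unfold pd
  have hlin : ∀ (P : Matrix (Fin 3) (Fin 3) ℝ) (a : Fin 3),
      HasDerivAt (fun s : ℝ => P.mulVec (Function.update x i s) a) (P a i) (x i) := by
    intro P a
    have : (fun s => P.mulVec (Function.update x i s) a)
        = fun s => P.mulVec x a + (s - x i) * P a i := by
      funext s; exact mulVec_update P x i s a
    rw [this]
    simpa using (((hasDerivAt_id (x i)).sub_const (x i)).mul_const (P a i)).const_add
      (P.mulVec x a)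
  have h := ((hlin M k).mul (hlin N l)).sub ((hlin M k').mul (hlin N l'))
  have h2 : (fun s : ℝ => M.mulVec (Function.update x i s) k * N.mulVec (Function.update x i s) l
        - M.mulVec (Function.update x i s) k' * N.mulVec (Function.update x i s) l')
      = fun s => (fun s : ℝ => M.mulVec (Function.update x i s) k) s *
          (fun s : ℝ => N.mulVec (Function.update x i s) l) s -
          (fun s : ℝ => M.mulVec (Function.update x i s) k') s *
          (fun s : ℝ => N.mulVec (Function.update x i s) l') s := rfl
  refine h.deriv.trans ?_
  simp [Function.update_self]

lemma pd_p (a b : ℝ) (M N : Matrix (Fin 3) (Fin 3) ℝ) (i : Fin 3) (x : Fin 3 → ℝ) :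
    pd i (fun y => a * (M.mulVec y ⬝ᵥ M.mulVec y) + b * (N.mulVec y ⬝ᵥ N.mulVec y)) x
      = 2 * a * (M.mulVec x ⬝ᵥ fun k => M k i) + 2 * b * (N.mulVec x ⬝ᵥ fun k => N k i) := by
  have key : ∀ (P : Matrix (Fin 3) (Fin 3) ℝ) (s : ℝ),
      (P.mulVec (Function.update x i s) ⬝ᵥ P.mulVec (Function.update x i s))
        = P.mulVec x ⬝ᵥ P.mulVec x + (2 * (s - x i) * (P.mulVec x ⬝ᵥ fun k => P k i)
          + (s - x i) ^ 2 * ((fun k => P k i) ⬝ᵥ fun k => P k i)) := by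
    intro P s
    simp only [dotProduct, Fin.sum_univ_three, mulVec_update]
    ring
  unfold pd
  have : (fun s => a * (M.mulVec (Function.update x i s) ⬝ᵥ M.mulVec (Function.update x i s))
        + b * (N.mulVec (Function.update x i s) ⬝ᵥ N.mulVec (Function.update x i s)))
      = fun s => a * (M.mulVec x ⬝ᵥ M.mulVec x + (2 * (s - x i) * (M.mulVec x ⬝ᵥ fun k => M k i)
          + (s - x i) ^ 2 * ((fun k => M k i) ⬝ᵥ fun k => M k i)))
        + b * (N.mulVec x ⬝ᵥ N.mulVec x + (2 * (s - x i) * (N.mulVec x ⬝ᵥ fun k => N k i)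
          + (s - x i) ^ 2 * ((fun k => N k i) ⬝ᵥ fun k => N k i))) := by
    funext s; rw [key, key]
  rw [this]
  have hs : HasDerivAt (fun s : ℝ => s - x i) 1 (x i) := (hasDerivAt_id (x i)).sub_const (x i)
  have hq : ∀ (u p w : ℝ), HasDerivAt
      (fun s : ℝ => u + (2 * (s - x i) * p + (s - x i) ^ 2 * w)) (2 * p) (x i) := by
    intro u p w
    have h1 : HasDerivAt (fun s : ℝ => 2 * (s - x i) * p) (2 * p) (x i) := by
      simpa [mul_comm] using ((hs.const_mul 2).mul_const p)
    have h2 : HasDerivAt (fun s : ℝ => (s - x i) ^ 2 * w) 0 (x i) := by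
      simpa using ((hs.pow 2).mul_const w)
    simpa using (h1.add h2).const_add u
  refine ((((hq _ _ _).const_mul a).add ((hq _ _ _).const_mul b)).deriv).trans ?_; ring

section MatDeriv
attribute [local instance] Matrix.linftyOpNormedRing Matrix.linftyOpNormedAlgebra

lemma hasDerivAt_conjExp (A B₀ : Matrix (Fin 3) (Fin 3) ℝ) (t : ℝ) :
    HasDerivAt (fun s : ℝ => exp (s • A) * B₀ * exp (-(s • A)))
      (A * (exp (t • A) * B₀ * exp (-(t • A)))
        - (exp (t • A) * B₀ * exp (-(t • A))) * A) t := by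
  have h1 : HasDerivAt (fun s : ℝ => exp (s • A)) (A * exp (t • A)) t :=
    hasDerivAt_exp_smul_const' A t
  have h2 : HasDerivAt (fun s : ℝ => exp (-(s • A))) (exp (-(t • A)) * (-A)) t := by
    have := hasDerivAt_exp_smul_const (-A) t
    simp only [smul_neg] at this
    exact this
  have := (h1.mul_const B₀).mul h2
  refine this.congr_deriv ?_
  noncomm_ring

lemma hasDerivAt_conjExp_entry (A B₀ : Matrix (Fin 3) (Fin 3) ℝ) (t : ℝ) (x : Fin 3 → ℝ)
    (i : Fin 3) :
    HasDerivAt (fun s : ℝ => (exp (s • A) * B₀ * exp (-(s • A))).mulVec x i)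
      ((A * (exp (t • A) * B₀ * exp (-(t • A)))
        - (exp (t • A) * B₀ * exp (-(t • A))) * A).mulVec x i) t := by
  let L : Matrix (Fin 3) (Fin 3) ℝ →ₗ[ℝ] ℝ :=
    { toFun := fun M => M.mulVec x i
      map_add' := by intro M N; simp [Matrix.add_mulVec]
      map_smul' := by intro c M; simp [Matrix.smul_mulVec] }
  have hL := (L.toContinuousLinearMap.hasFDerivAt (x := exp (t • A) * B₀ * exp (-(t • A))))
  exact (hL.comp_hasDerivAt t (hasDerivAt_conjExp A B₀ t))

end MatDeriv

lemma conjExp_skew (A B₀ : Matrix (Fin 3) (Fin 3) ℝ) (hA : Aᵀ = -A) (hB : B₀ᵀ = -B₀) (t : ℝ) :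
    (exp (t • A) * B₀ * exp (-(t • A)))ᵀ = -(exp (t • A) * B₀ * exp (-(t • A))) := by
  have hT1 : (exp (t • A))ᵀ = exp (-(t • A)) := by
    rw [← Matrix.exp_transpose]
    congr 1
    rw [Matrix.transpose_smul, hA]; simp
  have hT2 : (exp (-(t • A)))ᵀ = exp (t • A) := by
    rw [← Matrix.exp_transpose]
    congr 1
    rw [Matrix.transpose_neg, Matrix.transpose_smul, hA]; simp
  rw [Matrix.transpose_mul, Matrix.transpose_mul, hT1, hT2, hB]
  simp [Matrix.mul_assoc, Matrix.neg_mul, Matrix.mul_neg]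

end Aux

lemma vdiv_skew (M : Matrix (Fin 3) (Fin 3) ℝ) (hM : ∀ i j, M j i = -M i j)
    (x : Fin 3 → ℝ) : vdiv (fun y => M.mulVec y) x = 0 := by
  have hMd : ∀ i, M i i = 0 := fun i => by have := hM i i; linarith
  simp [vdiv, pd_linear, Fin.sum_univ_three, hMd]

lemma momentum_aux (ρ ν μ₀ : ℝ) (hρ : ρ ≠ 0) (A B : Matrix (Fin 3) (Fin 3) ℝ)
    (hA' : ∀ i j, A j i = -A i j) (hB' : ∀ i j, B j i = -B i j)
    (x : Fin 3 → ℝ) (i : Fin 3) (t₀ : ℝ) :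
    deriv (fun _ : ℝ => A.mulVec x i) t₀
        + (∑ j, A.mulVec x j * pd j (fun y => A.mulVec y i) x)
        - μ₀ * cross3 (B.mulVec x) (vcurl (fun y => B.mulVec y) x) i
        + (1 / ρ) * pd i (fun y => (ρ / 2) * (A.mulVec y ⬝ᵥ A.mulVec y)
            + ρ * μ₀ * (B.mulVec y ⬝ᵥ B.mulVec y)) x
        = ν * slap (fun y => A.mulVec y i) x := by
  have hAd : ∀ i, A i i = 0 := fun i => by have := hA' i i; linarith
  have hBd : ∀ i, B i i = 0 := fun i => by have := hB' i i; linarith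
  rw [deriv_const, slap_linear, pd_p (ρ/2) (ρ*μ₀) A B i x]
  fin_cases i <;>
  · simp only [vcurl, cross3, Matrix.cons_val_zero, Matrix.cons_val_one,
      Matrix.cons_val_two, Matrix.tail_cons, Matrix.head_cons, Fin.isValue, Fin.reduceFinMk,
      Fin.zero_eta, Fin.mk_one]
    simp only [pd_linear]
    simp only [Matrix.mulVec, dotProduct, Fin.sum_univ_three]
    field_simp
    simp only [hA' 0 1, hA' 0 2, hA' 1 2, hAd, hB' 0 1, hB' 0 2, hB' 1 2, hBd]
    ring

lemma induction_aux (η : ℝ) (A B : Matrix (Fin 3) (Fin 3) ℝ)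
    (hA' : ∀ i j, A j i = -A i j) (hB' : ∀ i j, B j i = -B i j)
    (x : Fin 3 → ℝ) (i : Fin 3) :
    (A * B - B * A).mulVec x i
      = vcurl (fun y => cross3 (A.mulVec y) (B.mulVec y)) x i
        + η * slap (fun y => B.mulVec y i) x := by
  have hAd : ∀ i, A i i = 0 := fun i => by have := hA' i i; linarith
  have hBd : ∀ i, B i i = 0 := fun i => by have := hB' i i; linarith
  rw [slap_linear]
  fin_cases i <;>
  · simp only [vcurl, cross3, Matrix.cons_val_zero, Matrix.cons_val_one,
      Matrix.cons_val_two, Matrix.tail_cons, Matrix.head_cons, Fin.isValue, Fin.reduceFinMk,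
      Fin.zero_eta, Fin.mk_one]
    simp only [pd_bilin]
    simp only [Matrix.mulVec, dotProduct, Matrix.mul_apply, Matrix.sub_apply,
      Fin.sum_univ_three]
    simp only [hA' 0 1, hA' 0 2, hA' 1 2, hAd, hB' 0 1, hB' 0 2, hB' 1 2, hBd]
    ring

/-- Proposition 2.4: `v = Ax` with `A` constant skew-symmetric,
`H(t) = e^{tA} B₀ e^{-tA} x` with `B₀` skew-symmetric. -/
theorem stmt_3 (ρ ν μ₀ η : ℝ) (hρ : 0 < ρ)
    (A B₀ : Matrix (Fin 3) (Fin 3) ℝ)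
    (hA : Aᵀ = -A) (hB : B₀ᵀ = -B₀) :
    MHD ρ ν μ₀ η (fun _ x => A.mulVec x)
      (fun t x =>
        (NormedSpace.exp (t • A) * B₀ * NormedSpace.exp (-(t • A))).mulVec x)
      (fun t x => (ρ / 2) * (A.mulVec x ⬝ᵥ A.mulVec x)
        + ρ * μ₀ *
          ((NormedSpace.exp (t • A) * B₀ * NormedSpace.exp (-(t • A))).mulVec x ⬝ᵥ
            (NormedSpace.exp (t • A) * B₀ * NormedSpace.exp (-(t • A))).mulVec x)) := by
  intro t x
  set B : Matrix (Fin 3) (Fin 3) ℝ :=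
    NormedSpace.exp (t • A) * B₀ * NormedSpace.exp (-(t • A)) with hBdef
  have hBskew : Bᵀ = -B := conjExp_skew A B₀ hA hB t
  have hA' : ∀ i j, A j i = -A i j := fun i j => congrFun (congrFun hA i) j
  have hB' : ∀ i j, B j i = -B i j := fun i j => congrFun (congrFun hBskew i) j
  refine ⟨?_, ?_, ?_, ?_⟩
  · exact vdiv_skew A hA' x
  · exact fun i => momentum_aux ρ ν μ₀ (ne_of_gt hρ) A B hA' hB' x i t
  · exact vdiv_skew B hB' x
  · intro i
    exact Eq.trans ((hasDerivAt_conjExp_entry A B₀ t x i).deriv)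
      (induction_aux η A B hA' hB' x i)
end

section
/- Let A : ℝ → M₃(ℝ) be continuous and B : ℝ → M₃(ℝ) be differentiable, both with trace 0 for every t, and set v(t,x) = A(t)x, H(t,x) = B(t)x. Then H satisfies the induction equation ∂ₜH = ∇×(v×H) + η ΔH at every point of ℝ × ℝ³ if and only if B′(t) = A(t)B(t) − B(t)A(t) for every t. (This is the paper's reduction of equation (M4) under the linear ansatz to the ODE system (2.7)–(2.9).) -/
open Real Matrix

lemma hasDerivAt_mulVec_update (M : Matrix (Fin 3) (Fin 3) ℝ) (i k : Fin 3) (x : Fin 3 → ℝ) :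
    HasDerivAt (fun s => M.mulVec (Function.update x k s) i) (M i k) (x k) := by
  have h : (fun s => M.mulVec (Function.update x k s) i)
      = fun s => M i k * (s - x k) + M.mulVec x i := by
    funext s
    fin_cases k <;>
      simp [Matrix.mulVec, dotProduct, Fin.sum_univ_three, Function.update] <;> ring
  rw [h]
  simpa using (((hasDerivAt_id (x k)).sub_const (x k)).const_mul (M i k)).add_const (M.mulVec x i)

lemma pd_mulVec (M : Matrix (Fin 3) (Fin 3) ℝ) (i k : Fin 3) (x : Fin 3 → ℝ) :
    pd k (fun y => M.mulVec y i) x = M i k :=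
  (hasDerivAt_mulVec_update M i k x).deriv

lemma pd_cross (M N : Matrix (Fin 3) (Fin 3) ℝ) (a b c d k : Fin 3) (x : Fin 3 → ℝ) :
    pd k (fun y => M.mulVec y a * N.mulVec y b - M.mulVec y c * N.mulVec y d) x
      = (M a k * N.mulVec x b + M.mulVec x a * N b k)
        - (M c k * N.mulVec x d + M.mulVec x c * N d k) := by
  have h := ((hasDerivAt_mulVec_update M a k x).mul (hasDerivAt_mulVec_update N b k x)).sub
    ((hasDerivAt_mulVec_update M c k x).mul (hasDerivAt_mulVec_update N d k x))
  simp only [Function.update_eq_self] at h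
  exact h.deriv

lemma slap_mulVec (M : Matrix (Fin 3) (Fin 3) ℝ) (i : Fin 3) (x : Fin 3 → ℝ) :
    slap (fun y => M.mulVec y i) x = 0 := by
  unfold slap
  simp only [pd_mulVec]
  simp [pd]

lemma curl_key0 (A B : Matrix (Fin 3) (Fin 3) ℝ) (hA : A.trace = 0) (hB : B.trace = 0)
    (x : Fin 3 → ℝ) :
    vcurl (fun y => cross3 (A.mulVec y) (B.mulVec y)) x 0 = (A * B - B * A).mulVec x 0 := by
  simp only [Matrix.trace, Fin.sum_univ_three, Matrix.diag] at hA hB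
  simp only [vcurl, cross3, Matrix.cons_val_zero, Matrix.cons_val_one, Matrix.head_cons,
    Matrix.cons_val_two, Matrix.tail_cons]
  rw [pd_cross, pd_cross]
  simp only [Matrix.mulVec, Matrix.mul_apply, dotProduct, Fin.sum_univ_three, Matrix.sub_apply]
  linear_combination (A 0 0 * x 0 + A 0 1 * x 1 + A 0 2 * x 2) * hB
    - (B 0 0 * x 0 + B 0 1 * x 1 + B 0 2 * x 2) * hA

lemma curl_key1 (A B : Matrix (Fin 3) (Fin 3) ℝ) (hA : A.trace = 0) (hB : B.trace = 0)
    (x : Fin 3 → ℝ) :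
    vcurl (fun y => cross3 (A.mulVec y) (B.mulVec y)) x 1 = (A * B - B * A).mulVec x 1 := by
  simp only [Matrix.trace, Fin.sum_univ_three, Matrix.diag] at hA hB
  simp only [vcurl, cross3, Matrix.cons_val_zero, Matrix.cons_val_one, Matrix.head_cons,
    Matrix.cons_val_two, Matrix.tail_cons]
  rw [pd_cross, pd_cross]
  simp only [Matrix.mulVec, Matrix.mul_apply, dotProduct, Fin.sum_univ_three, Matrix.sub_apply]
  linear_combination (A 1 0 * x 0 + A 1 1 * x 1 + A 1 2 * x 2) * hB
    - (B 1 0 * x 0 + B 1 1 * x 1 + B 1 2 * x 2) * hA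

lemma curl_key2 (A B : Matrix (Fin 3) (Fin 3) ℝ) (hA : A.trace = 0) (hB : B.trace = 0)
    (x : Fin 3 → ℝ) :
    vcurl (fun y => cross3 (A.mulVec y) (B.mulVec y)) x 2 = (A * B - B * A).mulVec x 2 := by
  simp only [Matrix.trace, Fin.sum_univ_three, Matrix.diag] at hA hB
  simp only [vcurl, cross3, Matrix.cons_val_zero, Matrix.cons_val_one, Matrix.head_cons,
    Matrix.cons_val_two, Matrix.tail_cons]
  rw [pd_cross, pd_cross]
  simp only [Matrix.mulVec, Matrix.mul_apply, dotProduct, Fin.sum_univ_three, Matrix.sub_apply]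
  linear_combination (A 2 0 * x 0 + A 2 1 * x 1 + A 2 2 * x 2) * hB
    - (B 2 0 * x 0 + B 2 1 * x 1 + B 2 2 * x 2) * hA

lemma curl_key (A B : Matrix (Fin 3) (Fin 3) ℝ) (hA : A.trace = 0) (hB : B.trace = 0)
    (x : Fin 3 → ℝ) (i : Fin 3) :
    vcurl (fun y => cross3 (A.mulVec y) (B.mulVec y)) x i = (A * B - B * A).mulVec x i := by
  fin_cases i
  · exact curl_key0 A B hA hB x
  · exact curl_key1 A B hA hB x
  · exact curl_key2 A B hA hB x

/-- Reduction of the induction equation (M4) under the linear ansatz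
`v = A(t)x`, `H = B(t)x` to the matrix ODE `B' = AB - BA` ((2.7)–(2.9)). -/
theorem stmt_18 (η : ℝ)
    (A B B' : ℝ → Matrix (Fin 3) (Fin 3) ℝ)
    (hAcont : Continuous A)
    (hAtr : ∀ t, (A t).trace = 0) (hBtr : ∀ t, (B t).trace = 0)
    (hB : ∀ i j t, HasDerivAt (fun s => B s i j) (B' t i j) t) :
    (∀ (t : ℝ) (x : Fin 3 → ℝ) (i : Fin 3),
        deriv (fun s => (B s).mulVec x i) t
          = vcurl (fun y => cross3 ((A t).mulVec y) ((B t).mulVec y)) x i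
            + η * slap (fun y => (B t).mulVec y i) x)
      ↔ ∀ t, B' t = A t * B t - B t * A t := by
  have hderiv : ∀ (t : ℝ) (x : Fin 3 → ℝ) (i : Fin 3),
      deriv (fun s => (B s).mulVec x i) t = (B' t).mulVec x i := by
    intro t x i
    have h : HasDerivAt (fun s => (B s).mulVec x i) ((B' t).mulVec x i) t := by
      simp only [Matrix.mulVec, dotProduct, Fin.sum_univ_three]
      exact (((hB i 0 t).mul_const (x 0)).add ((hB i 1 t).mul_const (x 1))).add
        ((hB i 2 t).mul_const (x 2))
    exact h.deriv
  constructor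
  · intro h t
    ext i j
    have h2 := h t (Pi.single j 1) i
    rw [hderiv, curl_key (A t) (B t) (hAtr t) (hBtr t), slap_mulVec] at h2
    simpa [Matrix.mulVec_single] using h2
  · intro h t x i
    rw [hderiv, curl_key (A t) (B t) (hAtr t) (hBtr t), slap_mulVec, h t]
    ring
end
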